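/- Let C be a small category and P : Cᵒᵖ ⥤ Type a presheaf that is tiny, i.e. such that the functor coyoneda.obj (Opposite.op P) : (Cᵒᵖ ⥤ Type) ⥤ Type preserves all small colimits. Then P is a retract of a representable presheaf: there exist an object X of C and natural transformations s : P ⟶ yoneda.obj X and r : yoneda.obj X ⟶ P with s ≫ r = 𝟙 P. -/

import Mathlib

open CategoryTheory CategoryTheory.Limits

/-- A tiny presheaf is a retract (condensate) of a representable presheaf. -/
theorem tiny_presheaf_retract_of_representable {C : Type} [SmallCategory C]
    (P : Cᵒᵖ ⥤ Type)
    (tiny : Nonempty (PreservesColimits (coyoneda.obj (Opposite.op P) :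
      (Cᵒᵖ ⥤ Type) ⥤ Type))) :
    ∃ (X : C) (s : P ⟶ yoneda.obj X) (r : yoneda.obj X ⟶ P), s ≫ r = 𝟙 P := by
  obtain ⟨h⟩ := tiny
  have hc : IsColimit ((coyoneda.obj (Opposite.op P)).mapCocone
      (Presheaf.coconeOfRepresentable P)) := isColimitOfPreserves _ (Presheaf.colimitOfRepresentable P)
  obtain ⟨j, s, hs⟩ := Types.jointly_surjective _ hc (𝟙 P)
  exact ⟨j.unop.1.unop, s ≫ (uliftYonedaIsoYoneda.{0}.app j.unop.1.unop).hom,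
    (uliftYonedaIsoYoneda.{0}.app j.unop.1.unop).inv ≫ (Presheaf.coconeOfRepresentable P).ι.app j,
    (Category.assoc _ _ _).trans ((congrArg (s ≫ ·) (Iso.hom_inv_id_assoc _ _)).trans hs)⟩
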